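/- If f: ℝ → ℝ is differentiable at x with f'(x) > 0, then the internal morphological gradient g_r^-[f](x) = (f(x) − ε_r[f](x))/r converges to f'(x) as r → 0⁺. -/
import Mathlib


open Filter Set

/-- The internal morphological gradient `(f(x) − ε_r[f](x))/r` converges to
`f'(x)` as `r → 0⁺`, if `f'(x) > 0`. -/
theorem internal_gradient_tendsto_deriv (f : ℝ → ℝ) (x : ℝ)
    (hnbhd : ∀ᶠ y in nhds x, DifferentiableAt ℝ f y)
    (hf : DifferentiableAt ℝ f x) (hpos : 0 < deriv f x) :
    Tendsto (fun r : ℝ =>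
        (f x - sInf ((fun b => f (x + b)) '' {b : ℝ | |b| ≤ r})) / r)
      (nhdsWithin 0 (Ioi 0)) (nhds (deriv f x)) := by
  set c := deriv f x with hc
  have hder := hf.hasDerivAt
  rw [hasDerivAt_iff_isLittleO] at hder
  rw [Metric.tendsto_nhdsWithin_nhds]
  intro ε hε
  have hev : ∀ᶠ y in nhds x, |f y - f x - (y - x) * c| ≤ ε / 2 * |y - x| := by
    filter_upwards [hder.def (by positivity : (0:ℝ) < ε / 2)] with y hy
    simpa [Real.norm_eq_abs, smul_eq_mul, mul_comm] using hy
  obtain ⟨δ, hδ, hδ'⟩ := Metric.eventually_nhds_iff.mp hev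
  refine ⟨δ, hδ, fun {r} hr hrδ => ?_⟩
  have hr0 : 0 < r := hr
  rw [Real.dist_eq, sub_zero, abs_of_pos hr0] at hrδ
  have key : ∀ b : ℝ, |b| ≤ r → |f (x + b) - f x - b * c| ≤ ε / 2 * r := by
    intro b hb
    have h1 : dist (x + b) x < δ := by
      rw [Real.dist_eq]
      simpa using lt_of_le_of_lt hb hrδ
    have h2 := hδ' h1
    simp only [add_sub_cancel_left] at h2
    calc |f (x + b) - f x - b * c| ≤ ε / 2 * |b| := h2
      _ ≤ ε / 2 * r := by nlinarith [abs_nonneg b]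
  set S := (fun b => f (x + b)) '' {b : ℝ | |b| ≤ r} with hS
  have hne : S.Nonempty := ⟨f (x + 0), 0, by simpa using hr0.le, rfl⟩
  have hlb : ∀ a ∈ S, f x - (c + ε / 2) * r ≤ a := by
    rintro a ⟨b, hb, rfl⟩
    have h := (abs_le.mp (key b hb)).1
    have hb1 : -r ≤ b := (abs_le.mp hb).1
    nlinarith
  have h_ge : f x - (c + ε / 2) * r ≤ sInf S := le_csInf hne hlb
  have hmem : f (x + -r) ∈ S := ⟨-r, by simp [abs_of_pos hr0], rfl⟩
  have h_le : sInf S ≤ f (x + -r) := csInf_le ⟨_, hlb⟩ hmem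
  have hfr := (abs_le.mp (key (-r) (by simp [abs_of_pos hr0]))).2
  rw [Real.dist_eq, abs_lt]
  have h1 : (f x - sInf S) / r ≤ c + ε / 2 := by
    rw [div_le_iff₀ hr0]; nlinarith
  have h2 : c - ε / 2 ≤ (f x - sInf S) / r := by
    rw [le_div_iff₀ hr0]; nlinarith
  constructor <;> linarith
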